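/- Let ⟨A,m⟩ be a monotonic distributive semilattice. Then ma ≤ m²a for all a ∈ A if and only if the relation R_m is transitive, i.e., (P,Z) ∈ R_m² implies (P,Z) ∈ R_m for all irreducible filters P and all Z ∈ S(X(A)). -/
import Mathlib


namespace DS

variable {A : Type*} [SemilatticeInf A] [OrderTop A]

/-- A filter: an upset containing the top element, closed under meets. -/
def IsFilt (F : Set A) : Prop :=
  IsUpperSet F ∧ ⊤ ∈ F ∧ ∀ ⦃a b : A⦄, a ∈ F → b ∈ F → a ⊓ b ∈ F

/-- An irreducible (prime) filter: a proper filter that is meet-irreducible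
among filters. -/
def IsIrred (F : Set A) : Prop :=
  IsFilt F ∧ F ≠ Set.univ ∧
    ∀ F₁ F₂ : Set A, IsFilt F₁ → IsFilt F₂ → F = F₁ ∩ F₂ → F = F₁ ∨ F = F₂

/-- An order ideal: a downset in which every pair of elements has an upper
bound in the set. -/
def IsOrdIdeal (I : Set A) : Prop :=
  IsLowerSet I ∧ ∀ a ∈ I, ∀ b ∈ I, ∃ c ∈ I, a ≤ c ∧ b ≤ c

/-- Distributivity for a meet-semilattice with top. -/
def IsDistrib (A : Type*) [SemilatticeInf A] [OrderTop A] : Prop :=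
  ∀ a b c : A, a ⊓ b ≤ c → ∃ a₁ b₁ : A, a ≤ a₁ ∧ b ≤ b₁ ∧ c = a₁ ⊓ b₁

/-- The set of irreducible filters of `A`, ordered by inclusion. -/
def Spec (A : Type*) [SemilatticeInf A] [OrderTop A] : Type _ :=
  {P : Set A // IsIrred P}

instance : PartialOrder (Spec A) := Subtype.partialOrder _

/-- `beta a` = the set of irreducible filters containing `a`. -/
def beta (a : A) : Set (Spec A) := {P : Spec A | a ∈ P.1}

/-- The topology on `Spec A` generated by the basis `{beta aᶜ : a ∈ A}`. -/
def specTop (A : Type*) [SemilatticeInf A] [OrderTop A] : TopologicalSpace (Spec A) :=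
  TopologicalSpace.generateFrom {s : Set (Spec A) | ∃ a : A, s = (beta a)ᶜ}

/-- Special basic saturated subsets: intersections of dually directed families
of basic opens `beta aᶜ`. -/
def SBS (Z : Set (Spec A)) : Prop :=
  ∃ L : Set A, (∀ a ∈ L, ∀ b ∈ L, ∃ c ∈ L, beta a ∪ beta b ⊆ beta c) ∧
    Z = ⋂ a ∈ L, (beta a)ᶜ

/-- The order ideal associated to a special basic saturated set. -/
def IA (Z : Set (Spec A)) : Set A := {a : A | beta a ∩ Z = ∅}

/-- The special basic saturated set associated to an order ideal. -/
def alphaI (I : Set A) : Set (Spec A) := {P : Spec A | P.1 ∩ I = ∅}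

/-- The filter associated to a closed set. -/
def FY (Y : Set (Spec A)) : Set A := {a : A | Y ⊆ beta a}

/-- The multirelation `R_m` on the dual space. -/
def Rm (m : A → A) (P : Spec A) (Z : Set (Spec A)) : Prop :=
  {a : A | m a ∈ P.1} ∩ IA Z = ∅

/-- The multirelation `G_m` on the dual space. -/
def Gm (m : A → A) (P : Spec A) (Y : Set (Spec A)) : Prop :=
  FY Y ⊆ {a : A | m a ∈ P.1}

/-- The composed relation `R_m²`. -/
def Rm2 (m : A → A) (P : Spec A) (Z : Set (Spec A)) : Prop :=
  ∃ S : Set (Spec A), SBS S ∧ Rm m P S ∧ ∀ x ∈ S, Rm m x Z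


theorem exists_irred_sep {b c : A} (h : ¬ b ≤ c) :
    ∃ P : Set A, IsIrred P ∧ b ∈ P ∧ c ∉ P := by
  set S : Set (Set A) := {F | IsFilt F ∧ b ∈ F ∧ c ∉ F} with hS
  have hb : {x : A | b ≤ x} ∈ S := by
    refine ⟨⟨fun x y hxy hx => le_trans hx hxy, le_top, fun x y hx hy => le_inf hx hy⟩,
      le_refl b, h⟩
  have hchainUB : ∀ ch ⊆ S, IsChain (· ⊆ ·) ch → ch.Nonempty →
      ∃ ub ∈ S, ∀ s ∈ ch, s ⊆ ub := by
    rintro ch hch hchain ⟨F₀, hF₀⟩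
    refine ⟨⋃₀ ch, ⟨⟨?_, ?_, ?_⟩, ?_, ?_⟩, fun s hs => Set.subset_sUnion_of_mem hs⟩
    · rintro x y hxy ⟨F, hF, hxF⟩
      exact ⟨F, hF, (hch hF).1.1 hxy hxF⟩
    · exact ⟨F₀, hF₀, (hch hF₀).1.2.1⟩
    · rintro x y ⟨F1, hF1, hx⟩ ⟨F2, hF2, hy⟩
      rcases hchain.total hF1 hF2 with hle | hle
      · exact ⟨F2, hF2, (hch hF2).1.2.2 (hle hx) hy⟩
      · exact ⟨F1, hF1, (hch hF1).1.2.2 hx (hle hy)⟩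
    · exact ⟨F₀, hF₀, (hch hF₀).2.1⟩
    · rintro ⟨F, hF, hcF⟩
      exact (hch hF).2.2 hcF
  obtain ⟨F, hbF, hFS, hmax⟩ := zorn_subset_nonempty S hchainUB _ hb
  · refine ⟨F, ⟨hFS.1, ?_, ?_⟩, hbF le_rfl, hFS.2.2⟩
    · intro hu
      exact hFS.2.2 (hu ▸ Set.mem_univ c)
    · intro F₁ F₂ hF₁ hF₂ hEq
      by_contra hcon
      push_neg at hcon
      have h1 : F ⊆ F₁ := hEq ▸ Set.inter_subset_left
      have h2 : F ⊆ F₂ := hEq ▸ Set.inter_subset_right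
      have hc1 : c ∈ F₁ := by
        by_contra hc1
        exact hcon.1 (Set.Subset.antisymm h1
          (hmax ⟨hF₁, h1 (hbF le_rfl), hc1⟩ h1))
      have hc2 : c ∈ F₂ := by
        by_contra hc2
        exact hcon.2 (Set.Subset.antisymm h2
          (hmax ⟨hF₂, h2 (hbF le_rfl), hc2⟩ h2))
      exact hFS.2.2 (hEq ▸ Set.mem_inter hc1 hc2)

end DS

open DS Set

theorem le_of_beta_subset {A : Type*} [SemilatticeInf A] [OrderTop A] {b c : A}
    (h : (beta b : Set (Spec A)) ⊆ beta c) : b ≤ c := by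
  by_contra hbc
  obtain ⟨P, hPirr, hbP, hcP⟩ := DS.exists_irred_sep hbc
  have hmem : (⟨P, hPirr⟩ : Spec A) ∈ (beta b : Set (Spec A)) := hbP
  have : (⟨P, hPirr⟩ : Spec A) ∈ (beta c : Set (Spec A)) := h hmem
  exact hcP this

theorem mem_IA_compl {A : Type*} [SemilatticeInf A] [OrderTop A] {b c : A}
    (h : b ∈ IA ((beta c)ᶜ : Set (Spec A))) : b ≤ c := by
  refine le_of_beta_subset (fun x hx => ?_)
  by_contra hc
  exact (Set.eq_empty_iff_forall_notMem.mp h x) ⟨hx, hc⟩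

theorem SBS_beta_compl {A : Type*} [SemilatticeInf A] [OrderTop A] (c : A) :
    SBS ((beta c)ᶜ : Set (Spec A)) := by
  refine ⟨{c}, ?_, by simp⟩
  intro x hx y hy
  rw [Set.mem_singleton_iff] at hx hy
  refine ⟨c, rfl, ?_⟩
  rw [hx, hy]
  simp

theorem stmt16 {A : Type*} [SemilatticeInf A] [OrderTop A] (hA : IsDistrib A)
    (m : A → A) (hm : ∀ a b : A, a ≤ b → m a ≤ m b) :
    (∀ a : A, m a ≤ m (m a)) ↔
      ∀ P : Spec A, ∀ Z : Set (Spec A), SBS Z → Rm2 m P Z → Rm m P Z := by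
  constructor
  · rintro hmm P Z _ ⟨S, _, hPS, hSZ⟩
    rw [Rm, Set.eq_empty_iff_forall_notMem]
    rintro a ⟨haP, haI⟩
    have hmaI : m a ∈ IA S := by
      rw [IA, Set.mem_setOf_eq, Set.eq_empty_iff_forall_notMem]
      rintro x ⟨hx1, hx2⟩
      have hx := hSZ x hx2
      rw [Rm, Set.eq_empty_iff_forall_notMem] at hx
      exact hx a ⟨hx1, haI⟩
    have hmma : m (m a) ∈ P.1 := P.2.1.1 (hmm a) haP
    rw [Rm, Set.eq_empty_iff_forall_notMem] at hPS
    exact hPS (m a) ⟨hmma, hmaI⟩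
  · intro htr a
    by_contra h
    obtain ⟨Pset, hPirr, hbP, hcP⟩ := DS.exists_irred_sep h
    set P : Spec A := ⟨Pset, hPirr⟩ with hP
    have hRm2 : Rm2 m P ((beta a)ᶜ) := by
      refine ⟨(beta (m a))ᶜ, SBS_beta_compl _, ?_, ?_⟩
      · rw [Rm, Set.eq_empty_iff_forall_notMem]
        rintro b ⟨hb1, hb2⟩
        have hble : b ≤ m a := mem_IA_compl hb2
        exact hcP (hPirr.1.1 (hm b (m a) hble) hb1)
      · intro x hx
        rw [Rm, Set.eq_empty_iff_forall_notMem]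
        rintro b ⟨hb1, hb2⟩
        have hble : b ≤ a := mem_IA_compl hb2
        exact hx (x.2.1.1 (hm b a hble) hb1)
    have hRm := htr P ((beta a)ᶜ) (SBS_beta_compl a) hRm2
    rw [Rm, Set.eq_empty_iff_forall_notMem] at hRm
    refine hRm a ⟨hbP, ?_⟩
    show beta a ∩ (beta a)ᶜ = ∅
    exact Set.inter_compl_self _
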